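/- Assume (EA). For all r, k, s ∈ ℕ: 𝒫_qsym^{r+k+s} ∘ (I_r ⊗ 𝒫_qsym^k ⊗ I_s) = 𝒫_qsym^{r+k+s}, where 𝒫_qsym^m denotes the restriction of 𝒫_qsym to T^m and I_r ⊗ 𝒫_qsym^k ⊗ I_s is the operator on T^{r+k+s} = T^r ⊗ T^k ⊗ T^s applying 𝒫_qsym^k to the middle tensor factor and the identity to the outer factors. -/

import Mathlib

/- Setting (common to all statements):
`V` is the complex vector space with basis `X_1, …, X_N`, `T = T(V)` the tensor algebra,
realized concretely as the algebra of the free monoid of words in the letters `Fin N`;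
the homogeneous component `T^n` is the span of the words of length `n`.
For `j < i` we are given nonzero scalars `b i j` and elements `p i j` in the span of the
`X_k ⊗ X_l` with `k, l ≤ i - 1`; `I_R` is the two-sided ideal generated by the elements
`X_i ⊗ X_j − b_{ij} X_j ⊗ X_i − p_{ij}`, and `𝒜 = T/I_R`. -/

open scoped BigOperators

noncomputable section

namespace QDiff

/-- Words in the letters `X_1, …, X_N` (indexed by `Fin N`). -/
abbrev Word (N : ℕ) := FreeMonoid (Fin N)

/-- The tensor algebra `T(V)` over the `N`-dimensional space `V` with basis `X_1,…,X_N`,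
realized concretely as the monoid algebra on words. -/
abbrev T (N : ℕ) := MonoidAlgebra ℂ (Word N)

variable {N : ℕ}

/-- The basis vector `X_i` of `V ⊆ T(V)`. -/
def X (i : Fin N) : T N := MonoidAlgebra.single (FreeMonoid.of i) 1

/-- The monomial of `T(V)` associated to a word. -/
def mono (w : Word N) : T N := MonoidAlgebra.single w 1

/-- Length (tensor degree) of a word. -/
def wlen (w : Word N) : ℕ := (FreeMonoid.toList w).length

/-- `cnt w k`: the number of occurrences of the letter `X_k` in the word `w`;
so `fun k => cnt w k` is `ℓ(w)`. -/
def cnt (w : Word N) (k : Fin N) : ℕ := (FreeMonoid.toList w).count k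

/-- `w' <_l w`: at the smallest index at which `ℓ(w')` and `ℓ(w)` differ,
the entry of `ℓ(w')` is strictly greater than that of `ℓ(w)`. -/
def lexLt (w' w : Word N) : Prop :=
  ∃ k : Fin N, (∀ j : Fin N, j < k → cnt w' j = cnt w j) ∧ cnt w k < cnt w' k

/-- `w' ≤_l w`. -/
def lexLe (w' w : Word N) : Prop := (∀ k : Fin N, cnt w' k = cnt w k) ∨ lexLt w' w

/-- The homogeneous component `T^n` of the tensor algebra. -/
def Tdeg (N n : ℕ) : Submodule ℂ (T N) :=
  Submodule.span ℂ {x : T N | ∃ w : Word N, wlen w = n ∧ x = mono w}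

variable (b : Fin N → Fin N → ℂ) (p : Fin N → Fin N → T N)

/-- The scalars `b i j` (for `j < i`) are nonzero. -/
def GoodB : Prop := ∀ i j : Fin N, j < i → b i j ≠ 0

/-- Each `p i j` (for `j < i`) lies in the span of the monomials `X_k ⊗ X_l`
with `k, l ≤ i - 1`. -/
def GoodP : Prop := ∀ i j : Fin N, j < i →
  p i j ∈ Submodule.span ℂ {x : T N | ∃ k l : Fin N, k < i ∧ l < i ∧ x = X k * X l}

/-- The generator `X_i ⊗ X_j − b_{ij} X_j ⊗ X_i − p_{ij}` of the ideal of relations. -/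
def relGen (i j : Fin N) : T N := X i * X j - b i j • (X j * X i) - p i j

/-- The two-sided ideal `I_R` of relations (as a `ℂ`-submodule it is the span of the
elements `a ⬝ relGen i j ⬝ c`). -/
def IR : Submodule ℂ (T N) :=
  Submodule.span ℂ
    {x : T N | ∃ (i j : Fin N) (a c : T N), j < i ∧ x = a * relGen b p i j * c}

/-- Condition (EA): every `u ∈ I_R` lies in the span of the elements
`a ⊗ (X_i ⊗ X_j − b_{ij} X_j ⊗ X_i − p_{ij}) ⊗ c`, where `j < i` and `a, c` are monomials
of `T` such that the monomial `a ⊗ X_i ⊗ X_j ⊗ c` is `≤_l` every monomial occurring in `u`. -/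
def EA : Prop :=
  ∀ u ∈ IR b p, u ∈ Submodule.span ℂ
    {x : T N | ∃ (i j : Fin N) (a c : Word N), j < i ∧
      x = mono a * relGen b p i j * mono c ∧
      ∀ w ∈ (MonoidAlgebra.coeff u : Word N →₀ ℂ).support,
        lexLe (a * (FreeMonoid.of i * FreeMonoid.of j) * c) w}

/-- The map `S : V ⊗ V → V ⊗ V` on pairs of basis vectors. -/
def Sact (x y : Fin N) : T N :=
  if y < x then b x y • (X y * X x) + p x y
  else if x < y then (b y x)⁻¹ • (X y * X x - p y x)
  else X x * X y

/-- The map `S̄ : V ⊗ V → V ⊗ V` on pairs of basis vectors. -/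
def SbarAct (x y : Fin N) : T N :=
  if y < x then b x y • (X y * X x)
  else if x < y then (b y x)⁻¹ • (X y * X x)
  else X x * X y

/-- Extend a function on words to a linear endomorphism of `T(V)`. -/
def liftWord (f : Word N → T N) : T N →ₗ[ℂ] T N :=
  Finsupp.lsum ℂ (fun w => LinearMap.toSpanSingleton ℂ (T N) (f w)) ∘ₗ
    (MonoidAlgebra.coeffLinearEquiv ℂ : T N ≃ₗ[ℂ] (Word N →₀ ℂ)).toLinearMap

/-- The action of the paper's `σ_{k+1}` (acting on the tensor factors in 0-indexed
positions `k, k+1`) on a word; identity on words that are too short. -/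
def sigmaWord (k : ℕ) (w : Word N) : T N :=
  if h : k + 2 ≤ (FreeMonoid.toList w).length then
    mono (FreeMonoid.ofList ((FreeMonoid.toList w).take k)) *
      Sact b p ((FreeMonoid.toList w).get ⟨k, by omega⟩)
        ((FreeMonoid.toList w).get ⟨k + 1, by omega⟩) *
      mono (FreeMonoid.ofList ((FreeMonoid.toList w).drop (k + 2)))
  else mono w

/-- The paper's operator `σ_{k+1}`: it acts as `S` on the tensor factors in 0-indexed
positions `k, k+1` and as the identity on all other factors. -/
def sigma (k : ℕ) : T N →ₗ[ℂ] T N := liftWord (sigmaWord b p k)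

/-- The action of the paper's `σ̄_{k+1}` on a word. -/
def sigmabarWord (k : ℕ) (w : Word N) : T N :=
  if h : k + 2 ≤ (FreeMonoid.toList w).length then
    mono (FreeMonoid.ofList ((FreeMonoid.toList w).take k)) *
      SbarAct b ((FreeMonoid.toList w).get ⟨k, by omega⟩)
        ((FreeMonoid.toList w).get ⟨k + 1, by omega⟩) *
      mono (FreeMonoid.ofList ((FreeMonoid.toList w).drop (k + 2)))
  else mono w

/-- The paper's operator `σ̄_{k+1}`: it acts as `S̄` on the tensor factors in 0-indexed
positions `k, k+1` and as the identity on all other factors. -/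
def sigmabar (k : ℕ) : T N →ₗ[ℂ] T N := liftWord (sigmabarWord b k)

/-- The scalar by which `S̄` twists the (ordered) pair `(x, y)`. -/
def betaC (x y : Fin N) : ℂ := if y < x then b x y else if x < y then (b y x)⁻¹ else 1

/-- The coefficient of the quasi-permutation action of `σ ∈ S_n` on the word
`X_{f 0} ⊗ ⋯ ⊗ X_{f (n-1)}`: the product of `β` over the inversions of `σ`. -/
def permCoeff {n : ℕ} (σ : Equiv.Perm (Fin n)) (f : Fin n → Fin N) : ℂ :=
  ∏ q ∈ Finset.univ.filter (fun q : Fin n × Fin n => q.1 < q.2 ∧ σ q.2 < σ q.1),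
    betaC b (f q.1) (f q.2)

/-- The quasi-permutation action of `σ ∈ S_n` on a word
(identity on words of length `≠ n`). -/
def permWordFun {n : ℕ} (σ : Equiv.Perm (Fin n)) (w : Word N) : T N :=
  if h : (FreeMonoid.toList w).length = n then
    permCoeff b σ (fun j => (FreeMonoid.toList w).get (Fin.cast h.symm j)) •
      mono (FreeMonoid.ofList
        (List.ofFn fun j => (FreeMonoid.toList w).get (Fin.cast h.symm (σ⁻¹ j))))
  else mono w

/-- The operator `σ̄` on `T^n` for an arbitrary permutation `σ ∈ S_n`
(the quasi-permutation representation). -/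
def sigmabarPerm {n : ℕ} (σ : Equiv.Perm (Fin n)) : T N →ₗ[ℂ] T N :=
  liftWord (permWordFun b σ)

/-- The quasi-symmetrization operator `P_quasisym = (1/n!) ∑_{σ ∈ S_n} σ̄` on `T^n`. -/
def Pquasisym (n : ℕ) : T N →ₗ[ℂ] T N :=
  (n.factorial : ℂ)⁻¹ • ∑ σ : Equiv.Perm (Fin n), sigmabarPerm b σ

/-- The adjacent transposition `s_{k+1} = (k, k+1)` (0-indexed) in `S_n`. -/
def swapAdj (n : ℕ) (k : {k : ℕ // k + 2 ≤ n}) : Equiv.Perm (Fin n) :=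
  Equiv.swap ⟨k.1, by omega⟩ ⟨k.1 + 1, by omega⟩

/-- A choice, for each `σ ∈ S_n`, of a list of adjacent transpositions. -/
def DecompChoice (n : ℕ) := Equiv.Perm (Fin n) → List {k : ℕ // k + 2 ≤ n}

/-- The chosen lists really are decompositions: `σ = s_{i_1} ⋯ s_{i_r}`. -/
def ValidDecomp {n : ℕ} (D : DecompChoice n) : Prop :=
  ∀ σ : Equiv.Perm (Fin n), ((D σ).map (swapAdj n)).prod = σ

/-- `σ̂ = σ_{i_1} ⋯ σ_{i_r}` for the chosen decomposition `σ = s_{i_1} ⋯ s_{i_r}`. -/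
def Phat {n : ℕ} (D : DecompChoice n) (σ : Equiv.Perm (Fin n)) : Module.End ℂ (T N) :=
  ((D σ).map (fun k => (sigma b p k.1 : Module.End ℂ (T N)))).prod

/-- `P = (1/n!) ∑_{σ ∈ S_n} σ̂` (depending on the chosen decompositions `D`). -/
def POp {n : ℕ} (D : DecompChoice n) : Module.End ℂ (T N) :=
  (n.factorial : ℂ)⁻¹ • ∑ σ : Equiv.Perm (Fin n), Phat b p D σ

/-- `Q` is the operator `𝒫_qsym = lim_{M → ∞} P^M`: on each `T^n` and for every choice
of decompositions, the sequence `P^M u` is eventually equal to `Q u`. -/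
def IsPqsym (Q : T N →ₗ[ℂ] T N) : Prop :=
  ∀ (n : ℕ) (D : DecompChoice n), ValidDecomp D →
    ∀ u ∈ Tdeg N n, ∃ N₀ : ℕ, ∀ M ≥ N₀, ((POp b p D) ^ M) u = Q u

/-- The operator `I_r ⊗ Q^k ⊗ I_s` on `T^{r+k+s}`: on a word, apply `Q` to the middle
`k` tensor factors and the identity to the outer factors. -/
def middleMap (Q : T N →ₗ[ℂ] T N) (r k : ℕ) : T N →ₗ[ℂ] T N :=
  liftWord (fun w =>
    mono (FreeMonoid.ofList ((FreeMonoid.toList w).take r)) *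
      Q (mono (FreeMonoid.ofList (((FreeMonoid.toList w).drop r).take k))) *
      mono (FreeMonoid.ofList ((FreeMonoid.toList w).drop (r + k))))

/-- The pairing between `T(V^*)` (realized via the dual basis, hence again as the span
of words) and `T(V)`: a dual-basis word pairs to `1` with the corresponding word of the
same degree, and to `0` with all other words. -/
def pairT (w z : T N) : ℂ :=
  Finsupp.sum (MonoidAlgebra.coeff w : Word N →₀ ℂ) (fun a c => c * (MonoidAlgebra.coeff z : Word N →₀ ℂ) a)

/-- The quotient relation defining the quadratic algebra `𝒜 = T/I_R = RingQuot (Rel b p)`. -/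
inductive Rel (b : Fin N → Fin N → ℂ) (p : Fin N → Fin N → T N) : T N → T N → Prop
  | mk (i j : Fin N) (h : j < i) : Rel b p (X i * X j) (b i j • (X j * X i) + p i j)

/-- The ordered monomial `X_1^{a_1} ⊗ X_2^{a_2} ⊗ ⋯ ⊗ X_N^{a_N}`. -/
def ordMono (a : Fin N → ℕ) : T N := ((List.finRange N).map (fun i => X i ^ a i)).prod

/-! ### Auxiliary lemmas for Statement 18 -/

section Aux

lemma mono_mul (a c : Word N) : (mono a : T N) * mono c = mono (a * c) := by
  simp [mono, MonoidAlgebra.single_mul_single]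

lemma liftWord_single (f : Word N → T N) (w : Word N) (c : ℂ) :
    liftWord f (MonoidAlgebra.single w c) = c • f w := by
  unfold liftWord
  erw [LinearMap.comp_apply]
  erw [Finsupp.lsum_single (S := ℂ), LinearMap.toSpanSingleton_apply]

lemma liftWord_mono (f : Word N → T N) (w : Word N) :
    liftWord f (mono w) = f w := by
  rw [show (mono w : T N) = MonoidAlgebra.single w 1 from rfl, liftWord_single, one_smul]

lemma X_eq_mono (i : Fin N) : (X i : T N) = mono (FreeMonoid.of i) := rfl

lemma wlen_of (i : Fin N) : wlen (FreeMonoid.of i) = 1 := rfl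

lemma wlen_mul (a c : Word N) : wlen (a * c) = wlen a + wlen c := by
  simp [wlen, FreeMonoid.toList_mul]

lemma wlen_ofList (l : List (Fin N)) : wlen (FreeMonoid.ofList l) = l.length := rfl

lemma mem_Tdeg_of_eq {m n : ℕ} (h : m = n) {x : T N} (hx : x ∈ Tdeg N m) :
    x ∈ Tdeg N n := h ▸ hx

lemma mono_mem_Tdeg {n : ℕ} {w : Word N} (hw : wlen w = n) : (mono w : T N) ∈ Tdeg N n :=
  Submodule.subset_span ⟨w, hw, rfl⟩

lemma mul_mem_Tdeg {m n : ℕ} {x y : T N} (hx : x ∈ Tdeg N m) (hy : y ∈ Tdeg N n) :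
    x * y ∈ Tdeg N (m + n) := by
  induction hx using Submodule.span_induction with
  | mem a ha =>
    obtain ⟨wa, hwa, rfl⟩ := ha
    induction hy using Submodule.span_induction with
    | mem z hz =>
      obtain ⟨wc, hwc, rfl⟩ := hz
      rw [mono_mul]
      exact mono_mem_Tdeg (by rw [wlen_mul, hwa, hwc])
    | zero => rw [mul_zero]; exact zero_mem _
    | add u v hu hv ihu ihv => rw [mul_add]; exact add_mem ihu ihv
    | smul a u hu ih => rw [mul_smul_comm]; exact Submodule.smul_mem _ _ ih
  | zero => rw [zero_mul]; exact zero_mem _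
  | add u v hu hv ihu ihv => rw [add_mul]; exact add_mem ihu ihv
  | smul a u hu ih => rw [smul_mul_assoc]; exact Submodule.smul_mem _ _ ih

lemma X_mem_Tdeg (i : Fin N) : (X i : T N) ∈ Tdeg N 1 := by
  rw [X_eq_mono]; exact mono_mem_Tdeg (wlen_of i)

lemma p_mem_Tdeg (hp : GoodP p) {i j : Fin N} (h : j < i) : p i j ∈ Tdeg N 2 := by
  refine Submodule.span_le.2 ?_ (hp i j h)
  rintro x ⟨k, l, -, -, rfl⟩
  exact mem_Tdeg_of_eq (by norm_num) (mul_mem_Tdeg (X_mem_Tdeg k) (X_mem_Tdeg l))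

lemma Sact_mem_Tdeg (hp : GoodP p) (x y : Fin N) : Sact b p x y ∈ Tdeg N 2 := by
  unfold Sact
  split_ifs with h1 h2
  · exact add_mem (Submodule.smul_mem _ _
      (mem_Tdeg_of_eq (by norm_num) (mul_mem_Tdeg (X_mem_Tdeg y) (X_mem_Tdeg x)))) (p_mem_Tdeg p hp h1)
  · exact Submodule.smul_mem _ _ (sub_mem
      (mem_Tdeg_of_eq (by norm_num) (mul_mem_Tdeg (X_mem_Tdeg y) (X_mem_Tdeg x))) (p_mem_Tdeg p hp h2))
  · exact mem_Tdeg_of_eq (by norm_num) (mul_mem_Tdeg (X_mem_Tdeg x) (X_mem_Tdeg y))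

lemma sigmaWord_mem_Tdeg (hp : GoodP p) {n j : ℕ} {w : Word N} (hw : wlen w = n) :
    sigmaWord b p j w ∈ Tdeg N n := by
  unfold sigmaWord
  split_ifs with h
  · have hlen : (FreeMonoid.toList w).length = n := hw
    have h1 : (mono (FreeMonoid.ofList ((FreeMonoid.toList w).take j)) : T N) ∈ Tdeg N j :=
      mono_mem_Tdeg (by rw [wlen_ofList, List.length_take]; omega)
    have h3 : (mono (FreeMonoid.ofList ((FreeMonoid.toList w).drop (j + 2))) : T N) ∈
        Tdeg N (n - (j + 2)) :=
      mono_mem_Tdeg (by rw [wlen_ofList, List.length_drop]; omega)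
    have := mul_mem_Tdeg (mul_mem_Tdeg h1 (Sact_mem_Tdeg b p hp
      ((FreeMonoid.toList w).get ⟨j, by omega⟩)
      ((FreeMonoid.toList w).get ⟨j + 1, by omega⟩))) h3
    exact mem_Tdeg_of_eq (by omega) this
  · exact mono_mem_Tdeg hw

lemma sigma_mem_Tdeg (hp : GoodP p) {n j : ℕ} {u : T N} (hu : u ∈ Tdeg N n) :
    sigma b p j u ∈ Tdeg N n := by
  induction hu using Submodule.span_induction with
  | mem x hx =>
    obtain ⟨w, hw, rfl⟩ := hx
    rw [show sigma b p j (mono w) = sigmaWord b p j w from liftWord_mono _ _]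
    exact sigmaWord_mem_Tdeg b p hp hw
  | zero => rw [map_zero]; exact zero_mem _
  | add u v hu hv ihu ihv => rw [map_add]; exact add_mem ihu ihv
  | smul a u hu ih => rw [map_smul]; exact Submodule.smul_mem _ _ ih

/-- Product of a list of `σ` operators. -/
def sigL (l : List ℕ) : Module.End ℂ (T N) :=
  (l.map (fun i => (sigma b p i : Module.End ℂ (T N)))).prod

lemma sigL_nil : sigL b p [] = 1 := rfl

lemma sigL_cons (i : ℕ) (l : List ℕ) (u : T N) :
    sigL b p (i :: l) u = sigma b p i (sigL b p l u) := by
  unfold sigL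
  rw [List.map_cons, List.prod_cons, Module.End.mul_apply]

lemma sigL_mem_Tdeg (hp : GoodP p) (l : List ℕ) {n : ℕ} {u : T N} (hu : u ∈ Tdeg N n) :
    sigL b p l u ∈ Tdeg N n := by
  induction l with
  | nil => exact hu
  | cons i l ih => rw [sigL_cons]; exact sigma_mem_Tdeg b p hp ih

lemma Phat_eq_sigL {n : ℕ} (D : DecompChoice n) (σ : Equiv.Perm (Fin n)) :
    Phat b p D σ = sigL b p ((D σ).map Subtype.val) := by
  unfold Phat sigL
  rw [List.map_map]
  rfl

lemma Phat_mem_Tdeg (hp : GoodP p) {n : ℕ} (D : DecompChoice n) (σ : Equiv.Perm (Fin n))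
    {m : ℕ} {u : T N} (hu : u ∈ Tdeg N m) : Phat b p D σ u ∈ Tdeg N m := by
  rw [Phat_eq_sigL]; exact sigL_mem_Tdeg b p hp _ hu

lemma POp_mem_Tdeg (hp : GoodP p) {n : ℕ} (D : DecompChoice n)
    {m : ℕ} {u : T N} (hu : u ∈ Tdeg N m) : POp b p D u ∈ Tdeg N m := by
  unfold POp
  rw [LinearMap.smul_apply, LinearMap.sum_apply]
  exact Submodule.smul_mem _ _ (Submodule.sum_mem _ fun σ _ => Phat_mem_Tdeg b p hp D σ hu)

lemma exists_validDecomp (n : ℕ) : ∃ D : DecompChoice n, ValidDecomp D := by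
  cases n with
  | zero =>
    refine ⟨fun _ => [], fun σ => ?_⟩
    simp only [List.map_nil, List.prod_nil]
    exact Subsingleton.elim _ _
  | succ m =>
    have key : ∀ σ : Equiv.Perm (Fin (m + 1)),
        ∃ l : List {k : ℕ // k + 2 ≤ m + 1}, (l.map (swapAdj (m + 1))).prod = σ := by
      intro σ
      have hσ : σ ∈ Submonoid.closure
          (Set.range fun i : Fin m => Equiv.swap i.castSucc i.succ) := by
        rw [Equiv.Perm.mclosure_swap_castSucc_succ]; trivial
      obtain ⟨l, hl, hprod⟩ := Submonoid.exists_list_of_mem_closure hσ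
      clear hσ
      induction l generalizing σ with
      | nil => exact ⟨[], by simp [← hprod]⟩
      | cons y t ih =>
        obtain ⟨lt, hlt⟩ := ih t.prod (fun z hz => hl z (List.mem_cons_of_mem _ hz)) rfl
        obtain ⟨i, hi⟩ := hl y (List.mem_cons_self)
        refine ⟨⟨i.1, by omega⟩ :: lt, ?_⟩
        have e : swapAdj (m + 1) ⟨i.1, by omega⟩ = y := by
          rw [← hi]
          unfold swapAdj
          exact congrArg₂ Equiv.swap (Fin.ext rfl) (Fin.ext rfl)
        rw [List.map_cons, List.prod_cons, hlt, e, ← hprod, List.prod_cons]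
    exact ⟨fun σ => (key σ).choose, fun σ => (key σ).choose_spec⟩

lemma POp_mul_sigma {n : ℕ} (D₀ : DecompChoice n) (hD₀ : ValidDecomp D₀)
    (t : {k : ℕ // k + 2 ≤ n}) :
    ∃ D : DecompChoice n, ValidDecomp D ∧
      POp b p D = POp b p D₀ * (sigma b p t.1 : Module.End ℂ (T N)) := by
  refine ⟨fun σ => D₀ (σ * (swapAdj n t)⁻¹) ++ [t], ?_, ?_⟩
  · intro σ
    rw [List.map_append, List.prod_append, hD₀, List.map_cons, List.map_nil,
      List.prod_cons, List.prod_nil, mul_one, inv_mul_cancel_right]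
  · have key : ∀ σ : Equiv.Perm (Fin n),
        Phat b p (fun σ => D₀ (σ * (swapAdj n t)⁻¹) ++ [t]) σ =
          Phat b p D₀ (σ * (swapAdj n t)⁻¹) * (sigma b p t.1 : Module.End ℂ (T N)) := by
      intro σ
      unfold Phat
      rw [List.map_append, List.prod_append, List.map_cons, List.map_nil,
        List.prod_cons, List.prod_nil, mul_one]
    have hsum : ∑ σ : Equiv.Perm (Fin n), Phat b p D₀ (σ * (swapAdj n t)⁻¹) =
        ∑ σ : Equiv.Perm (Fin n), Phat b p D₀ σ :=
      Equiv.sum_comp (Equiv.mulRight (swapAdj n t)⁻¹) (Phat b p D₀)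
    unfold POp
    rw [Finset.sum_congr rfl (fun σ _ => key σ), ← Finset.sum_mul, hsum, smul_mul_assoc]

lemma Q_POp (Q : T N →ₗ[ℂ] T N) (hQ : IsPqsym b p Q) (hp : GoodP p) {n : ℕ}
    (D : DecompChoice n) (hD : ValidDecomp D) {u : T N} (hu : u ∈ Tdeg N n) :
    Q (POp b p D u) = Q u := by
  obtain ⟨N₁, h₁⟩ := hQ n D hD u hu
  obtain ⟨N₂, h₂⟩ := hQ n D hD _ (POp_mem_Tdeg b p hp D hu)
  have e1 : (POp b p D ^ (N₁ + N₂ + 1)) u = Q u := h₁ _ (by omega)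
  have e2 : (POp b p D ^ (N₁ + N₂)) (POp b p D u) = Q (POp b p D u) := h₂ _ (by omega)
  rw [← e1, ← e2, ← Module.End.mul_apply, ← pow_succ]

lemma Q_sigma (Q : T N →ₗ[ℂ] T N) (hQ : IsPqsym b p Q) (hp : GoodP p) {n : ℕ}
    (t : {k : ℕ // k + 2 ≤ n}) {u : T N} (hu : u ∈ Tdeg N n) :
    Q (sigma b p t.1 u) = Q u := by
  obtain ⟨D₀, hD₀⟩ := exists_validDecomp n
  obtain ⟨D, hD, hPD⟩ := POp_mul_sigma b p D₀ hD₀ t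
  have hσu : sigma b p t.1 u ∈ Tdeg N n := sigma_mem_Tdeg b p hp hu
  obtain ⟨N₁, h₁⟩ := hQ n D hD u hu
  obtain ⟨N₂, h₂⟩ := hQ n D hD _ (POp_mem_Tdeg b p hp D₀ hσu)
  have e1 : (POp b p D ^ (N₁ + N₂ + 1)) u = Q u := h₁ _ (by omega)
  have e2 : (POp b p D ^ (N₁ + N₂)) (POp b p D₀ (sigma b p t.1 u)) =
      Q (POp b p D₀ (sigma b p t.1 u)) := h₂ _ (by omega)
  have key : (POp b p D) u = POp b p D₀ (sigma b p t.1 u) := by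
    rw [hPD, Module.End.mul_apply]
  rw [← Q_POp b p Q hQ hp D₀ hD₀ hσu, ← e2, ← key, ← Module.End.mul_apply, ← pow_succ, e1]

lemma Q_sigL (Q : T N →ₗ[ℂ] T N) (hQ : IsPqsym b p Q) (hp : GoodP p) {n : ℕ}
    (l : List ℕ) (hl : ∀ i ∈ l, i + 2 ≤ n) {u : T N} (hu : u ∈ Tdeg N n) :
    Q (sigL b p l u) = Q u := by
  induction l with
  | nil => rfl
  | cons i l ih =>
    rw [sigL_cons]
    rw [Q_sigma b p Q hQ hp ⟨i, hl i (List.mem_cons_self)⟩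
      (sigL_mem_Tdeg b p hp l hu)]
    exact ih (fun j hj => hl j (List.mem_cons_of_mem _ hj))

end Aux
lemma ofList_append (l₁ l₂ : List (Fin N)) :
    FreeMonoid.ofList (l₁ ++ l₂) = FreeMonoid.ofList l₁ * FreeMonoid.ofList l₂ := rfl

lemma ofList_toList' (a : Word N) : FreeMonoid.ofList (FreeMonoid.toList a) = a := rfl

lemma sigmaWord_shift {r k j : ℕ} (hj : j + 2 ≤ k) (a m c : Word N)
    (ha : wlen a = r) (hm : wlen m = k) :
    sigmaWord b p (r + j) (a * m * c) = mono a * sigmaWord b p j m * mono c := by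
  have hA : (FreeMonoid.toList a).length = r := ha
  have hM : (FreeMonoid.toList m).length = k := hm
  have hbig : FreeMonoid.toList (a * m * c) =
      FreeMonoid.toList a ++ (FreeMonoid.toList m ++ FreeMonoid.toList c) := by
    rw [FreeMonoid.toList_mul, FreeMonoid.toList_mul, List.append_assoc]
  have hlen : r + j + 2 ≤ (FreeMonoid.toList (a * m * c)).length := by
    rw [hbig]; simp only [List.length_append]; omega
  have hj' : j + 2 ≤ (FreeMonoid.toList m).length := by omega
  unfold sigmaWord
  rw [dif_pos hlen, dif_pos hj']
  simp only [List.get_eq_getElem]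
  have e1 : (FreeMonoid.toList (a * m * c)).take (r + j) =
      FreeMonoid.toList a ++ (FreeMonoid.toList m).take j := by
    rw [hbig, show r + j = (FreeMonoid.toList a).length + j by omega, List.take_length_add_append,
      List.take_append_of_le_length (by omega)]
  have e2 : ∀ hh, (FreeMonoid.toList (a * m * c))[r + j]'hh =
      (FreeMonoid.toList m)[j]'(by omega) := by
    intro hh
    simp only [hbig] at hh ⊢
    rw [List.getElem_append_right (by omega), List.getElem_append_left (by omega)]
    congr 1
    omega
  have e3 : ∀ hh, (FreeMonoid.toList (a * m * c))[r + j + 1]'hh =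
      (FreeMonoid.toList m)[j + 1]'(by omega) := by
    intro hh
    simp only [hbig] at hh ⊢
    rw [List.getElem_append_right (by omega), List.getElem_append_left (by omega)]
    congr 1
    omega
  have e4 : (FreeMonoid.toList (a * m * c)).drop (r + j + 2) =
      (FreeMonoid.toList m).drop (j + 2) ++ FreeMonoid.toList c := by
    rw [hbig, show r + j + 2 = (FreeMonoid.toList a).length + (j + 2) by omega,
      List.drop_length_add_append, List.drop_append,
      show j + 2 - (FreeMonoid.toList m).length = 0 by omega, List.drop_zero]
  rw [e1, e4]
  simp only [e2, e3]
  simp only [ofList_append, ← mono_mul, ofList_toList']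
  simp only [mul_assoc]

lemma sigma_shift {r k j : ℕ} (hj : j + 2 ≤ k) (a c : Word N) (ha : wlen a = r)
    {x : T N} (hx : x ∈ Tdeg N k) :
    sigma b p (r + j) (mono a * x * mono c) = mono a * sigma b p j x * mono c := by
  induction hx using Submodule.span_induction with
  | mem z hz =>
    obtain ⟨m, hm, rfl⟩ := hz
    rw [mono_mul, mono_mul,
      show sigma b p (r + j) (mono (a * m * c)) = sigmaWord b p (r + j) (a * m * c) from
        liftWord_mono _ _,
      show sigma b p j (mono m) = sigmaWord b p j m from liftWord_mono _ _]
    exact sigmaWord_shift b p hj a m c ha hm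
  | zero => simp
  | add u v hu hv ihu ihv =>
    rw [mul_add, add_mul, map_add, ihu, ihv, map_add, mul_add, add_mul]
  | smul t z hz ih =>
    rw [mul_smul_comm, smul_mul_assoc, map_smul, ih, map_smul, mul_smul_comm, smul_mul_assoc]

lemma sigL_shift (hp : GoodP p) {r k : ℕ} (l : List ℕ) (hl : ∀ i ∈ l, i + 2 ≤ k)
    (a c : Word N) (ha : wlen a = r) {x : T N} (hx : x ∈ Tdeg N k) :
    sigL b p (l.map (fun i => r + i)) (mono a * x * mono c) =
      mono a * sigL b p l x * mono c := by
  induction l with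
  | nil => rfl
  | cons i t ih =>
    rw [List.map_cons, sigL_cons, sigL_cons,
      ih (fun i hi => hl i (List.mem_cons_of_mem _ hi))]
    exact sigma_shift b p (hl i (List.mem_cons_self)) a c ha
      (sigL_mem_Tdeg b p hp t hx)

/-- The operator `I_r ⊗ P^k ⊗ I_s` built from the averaging operator on `T^k`. -/
def middleP (r k : ℕ) (Dk : DecompChoice k) : Module.End ℂ (T N) :=
  (k.factorial : ℂ)⁻¹ • ∑ τ : Equiv.Perm (Fin k),
    sigL b p (((Dk τ).map Subtype.val).map (fun i => r + i))

lemma middleP_mem_Tdeg (hp : GoodP p) (r k : ℕ) (Dk : DecompChoice k) {n : ℕ} {u : T N}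
    (hu : u ∈ Tdeg N n) : middleP b p r k Dk u ∈ Tdeg N n := by
  unfold middleP
  rw [LinearMap.smul_apply, LinearMap.sum_apply]
  exact Submodule.smul_mem _ _ (Submodule.sum_mem _ fun τ _ => sigL_mem_Tdeg b p hp _ hu)

lemma middleP_shift (hp : GoodP p) {r k : ℕ} (Dk : DecompChoice k) (a c : Word N)
    (ha : wlen a = r) {x : T N} (hx : x ∈ Tdeg N k) :
    middleP b p r k Dk (mono a * x * mono c) = mono a * POp b p Dk x * mono c := by
  unfold middleP POp
  rw [LinearMap.smul_apply, LinearMap.sum_apply, LinearMap.smul_apply, LinearMap.sum_apply]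
  have step : ∀ τ : Equiv.Perm (Fin k),
      sigL b p (((Dk τ).map Subtype.val).map (fun i => r + i)) (mono a * x * mono c) =
        mono a * Phat b p Dk τ x * mono c := by
    intro τ
    rw [Phat_eq_sigL]
    exact sigL_shift b p hp _ (fun i hi => by
      obtain ⟨t, ht, rfl⟩ := List.mem_map.1 hi; exact t.2) a c ha hx
  rw [Finset.sum_congr rfl (fun τ _ => step τ), ← Finset.sum_mul, ← Finset.mul_sum,
    mul_smul_comm, smul_mul_assoc]

lemma middleP_pow_shift (hp : GoodP p) {r k : ℕ} (Dk : DecompChoice k) (a c : Word N)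
    (ha : wlen a = r) (M : ℕ) {x : T N} (hx : x ∈ Tdeg N k) :
    (middleP b p r k Dk ^ M) (mono a * x * mono c) = mono a * (POp b p Dk ^ M) x * mono c := by
  induction M generalizing x with
  | zero => simp
  | succ M ih =>
    rw [pow_succ, Module.End.mul_apply, middleP_shift b p hp Dk a c ha hx,
      ih (POp_mem_Tdeg b p hp Dk hx), pow_succ, Module.End.mul_apply]

lemma Q_middleP (Q : T N →ₗ[ℂ] T N) (hQ : IsPqsym b p Q) (hp : GoodP p) {n r k : ℕ}
    (hrk : r + k ≤ n) (Dk : DecompChoice k) {u : T N} (hu : u ∈ Tdeg N n) :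
    Q (middleP b p r k Dk u) = Q u := by
  unfold middleP
  rw [LinearMap.smul_apply, LinearMap.sum_apply, map_smul, map_sum]
  have step : ∀ τ : Equiv.Perm (Fin k),
      Q (sigL b p (((Dk τ).map Subtype.val).map (fun i => r + i)) u) = Q u := by
    intro τ
    refine Q_sigL b p Q hQ hp _ (fun i hi => ?_) hu
    obtain ⟨i', hi', rfl⟩ := List.mem_map.1 hi
    obtain ⟨t, ht, rfl⟩ := List.mem_map.1 hi'
    have := t.2
    omega
  rw [Finset.sum_congr rfl (fun τ _ => step τ), Finset.sum_const, Finset.card_univ,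
    Fintype.card_perm, Fintype.card_fin, ← Nat.cast_smul_eq_nsmul ℂ, smul_smul,
    inv_mul_cancel₀ (by exact_mod_cast Nat.factorial_ne_zero k), one_smul]

lemma Q_middleP_pow (Q : T N →ₗ[ℂ] T N) (hQ : IsPqsym b p Q) (hp : GoodP p) {n r k : ℕ}
    (hrk : r + k ≤ n) (Dk : DecompChoice k) (M : ℕ) {u : T N} (hu : u ∈ Tdeg N n) :
    Q ((middleP b p r k Dk ^ M) u) = Q u := by
  induction M generalizing u with
  | zero => simp
  | succ M ih =>
    rw [pow_succ, Module.End.mul_apply, ih (middleP_mem_Tdeg b p hp r k Dk hu),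
      Q_middleP b p Q hQ hp hrk Dk hu]
/-- `⋆⋆`: under (EA),
`𝒫_qsym^{r+k+s} ∘ (I_r ⊗ 𝒫_qsym^k ⊗ I_s) = 𝒫_qsym^{r+k+s}` on `T^{r+k+s}`. -/
theorem statement18 {N : ℕ} (b : Fin N → Fin N → ℂ) (p : Fin N → Fin N → T N)
    (hb : GoodB b) (hp : GoodP p) (hEA : EA b p) :
    ∀ Q : T N →ₗ[ℂ] T N, IsPqsym b p Q →
      ∀ (r k s : ℕ), ∀ u ∈ Tdeg N (r + k + s),
        Q (middleMap Q r k u) = Q u := by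
  intro Q hQ r k s u hu
  have key : ∀ w : Word N, wlen w = r + k + s →
      Q (middleMap Q r k (mono w)) = Q (mono w) := by
    intro w hw
    obtain ⟨Dk, hDk⟩ := exists_validDecomp k
    have hwlen : (FreeMonoid.toList w).length = r + k + s := hw
    set a := FreeMonoid.ofList ((FreeMonoid.toList w).take r) with ha_def
    set mid := FreeMonoid.ofList (((FreeMonoid.toList w).drop r).take k) with hmid_def
    set c := FreeMonoid.ofList ((FreeMonoid.toList w).drop (r + k)) with hc_def
    have ha : wlen a = r := by
      rw [ha_def, wlen_ofList, List.length_take]; omega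
    have hmid : wlen mid = k := by
      rw [hmid_def, wlen_ofList, List.length_take, List.length_drop]; omega
    have hw' : (a * mid * c : Word N) = w := by
      have : FreeMonoid.toList (a * mid * c) = FreeMonoid.toList w := by
        rw [FreeMonoid.toList_mul, FreeMonoid.toList_mul, ha_def, hmid_def, hc_def]
        simp only [FreeMonoid.toList_ofList]
        rw [List.append_assoc, ← List.drop_drop, List.take_append_drop,
          List.take_append_drop]
      rw [← ofList_toList' (a * mid * c), this, ofList_toList']
    have hmm : middleMap Q r k (mono w) = mono a * Q (mono mid) * mono c := by
      unfold middleMap; rw [liftWord_mono]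
    obtain ⟨N₀, hN₀⟩ := hQ k Dk hDk (mono mid) (mono_mem_Tdeg hmid)
    have hQmid : Q (mono mid) = ((POp b p Dk) ^ N₀) (mono mid) := (hN₀ N₀ le_rfl).symm
    rw [hmm, hQmid,
      ← middleP_pow_shift b p hp Dk a c ha N₀ (mono_mem_Tdeg hmid),
      mono_mul, mono_mul, hw']
    exact Q_middleP_pow b p Q hQ hp (by omega) Dk N₀ (mono_mem_Tdeg hw)
  induction hu using Submodule.span_induction with
  | mem z hz => obtain ⟨w, hw, rfl⟩ := hz; exact key w hw
  | zero => simp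
  | add u v hu hv ihu ihv => simp only [map_add, ihu, ihv]
  | smul t z hz ih => simp only [map_smul, ih]

end QDiff
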